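/- For X* ~ Sk(λ₁, λ₂), the left-shifted partial-mean identity holds: E[X* · 1_{X* ≥ 0}] = λ₂ P(X* = 1) + λ₁ P(X* = 0) + (λ₁ - λ₂) P(X* ≥ 1). -/

import Mathlib

open Real Filter

/-- PMF of the Poisson distribution with mean `l`. -/
noncomputable def poissonPMF (l : ℝ) (n : ℕ) : ℝ :=
  Real.exp (-l) * l ^ n / n.factorial

/-- PMF of the Skellam distribution `Sk(l1, l2)`, i.e. the distribution of the
difference `X₁ - X₂` of independent Poisson variables with means `l1`, `l2`,
obtained by the convolution formula. -/
noncomputable def skellamPMF (l1 l2 : ℝ) (x : ℤ) : ℝ :=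
  ∑' k : ℕ, (if 0 ≤ x + (k : ℤ) then poissonPMF l1 (x + (k : ℤ)).toNat else 0) * poissonPMF l2 k

/-- Modified Bessel function of the first kind of integer order `n`,
`I_n(z) = (z/2)^|n| ∑_{k} (z/2)^{2k}/(k! (k+|n|)!)`, with `I_{-n} = I_n`. -/
noncomputable def besselI (n : ℤ) (z : ℝ) : ℝ :=
  (z / 2) ^ n.natAbs *
    ∑' k : ℕ, (z / 2) ^ (2 * k) / ((k.factorial : ℝ) * (k + n.natAbs).factorial)

/-- Upper tail probability `P(X* ≥ a)` of the Skellam distribution. -/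
noncomputable def skellamTail (l1 l2 : ℝ) (a : ℤ) : ℝ :=
  ∑' x : ℤ, if a ≤ x then skellamPMF l1 l2 x else 0

section Helpers

lemma poissonPMF_nonneg {l : ℝ} (hl : 0 ≤ l) (n : ℕ) : 0 ≤ poissonPMF l n := by
  unfold poissonPMF; positivity
lemma poissonPMF_le_one {l : ℝ} (hl : 0 ≤ l) (n : ℕ) : poissonPMF l n ≤ 1 := by
  have h := Real.pow_div_factorial_le_exp (x:=l) hl n
  have : poissonPMF l n = Real.exp (-l) * (l ^ n / n.factorial) := by
    unfold poissonPMF; ring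
  rw [this, Real.exp_neg]
  calc (Real.exp l)⁻¹ * (l ^ n / n.factorial) ≤ (Real.exp l)⁻¹ * Real.exp l := by
        gcongr
    _ = 1 := inv_mul_cancel₀ (Real.exp_pos l).ne'
lemma summable_poissonPMF (l : ℝ) : Summable (poissonPMF l) := by
  have := (Real.summable_pow_div_factorial l).mul_left (Real.exp (-l))
  refine this.congr fun n => ?_
  unfold poissonPMF; ring
lemma poissonPMF_succ (l : ℝ) (n : ℕ) :
    ((n : ℝ) + 1) * poissonPMF l (n + 1) = l * poissonPMF l n := by
  unfold poissonPMF
  rw [Nat.factorial_succ]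
  have hn : ((n : ℝ) + 1) ≠ 0 := by positivity
  push_cast
  field_simp
  ring
lemma poissonPMF_add_le {l : ℝ} (hl : 0 ≤ l) (n k : ℕ) :
    poissonPMF l (n + k) ≤ poissonPMF l n * (l ^ k / k.factorial) := by
  have hfac : ((n.factorial * k.factorial : ℕ) : ℝ) ≤ ((n + k).factorial : ℝ) := by
    exact_mod_cast Nat.le_of_dvd (Nat.factorial_pos _)
      (Nat.factorial_mul_factorial_dvd_factorial_add n k)
  have h1 : poissonPMF l n * (l ^ k / k.factorial)
      = Real.exp (-l) * l ^ (n + k) / ((n.factorial : ℝ) * k.factorial) := by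
    unfold poissonPMF; rw [pow_add]; ring
  rw [h1]
  unfold poissonPMF
  push_cast at hfac ⊢
  gcongr
lemma skellam_nat (l1 l2 : ℝ) (m : ℕ) :
    skellamPMF l1 l2 (m : ℤ) = ∑' k : ℕ, poissonPMF l1 (m + k) * poissonPMF l2 k := by
  unfold skellamPMF
  refine tsum_congr fun k => ?_
  have h0 : (0 : ℤ) ≤ (m : ℤ) + (k : ℤ) := by positivity
  rw [if_pos h0]
  have ht : ((m : ℤ) + (k : ℤ)).toNat = m + k := by omega
  rw [ht]
variable {l1 l2 : ℝ}
lemma summable_inner (h1 : 0 ≤ l1) (h2 : 0 ≤ l2) (m : ℕ) :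
    Summable (fun k : ℕ => poissonPMF l1 (m + k) * poissonPMF l2 k) := by
  refine Summable.of_nonneg_of_le (fun k => mul_nonneg (poissonPMF_nonneg h1 _) (poissonPMF_nonneg h2 _)) (fun k => ?_) (summable_poissonPMF l2)
  calc poissonPMF l1 (m + k) * poissonPMF l2 k ≤ 1 * poissonPMF l2 k := by
        gcongr
        · exact poissonPMF_nonneg h2 k
        · exact poissonPMF_le_one h1 _
    _ = poissonPMF l2 k := one_mul _
lemma skellam_nat_nonneg (h1 : 0 ≤ l1) (h2 : 0 ≤ l2) (m : ℕ) :
    0 ≤ skellamPMF l1 l2 (m : ℤ) := by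
  rw [skellam_nat]
  exact tsum_nonneg fun k => mul_nonneg (poissonPMF_nonneg h1 _) (poissonPMF_nonneg h2 _)
lemma summable_weight (h1 : 0 ≤ l1) (h2 : 0 ≤ l2) :
    Summable (fun k : ℕ => (l1 ^ k / k.factorial) * poissonPMF l2 k) := by
  refine Summable.of_nonneg_of_le
    (fun k => mul_nonneg (by positivity) (poissonPMF_nonneg h2 _))
    (fun k => ?_) (Real.summable_pow_div_factorial l1)
  calc (l1 ^ k / k.factorial) * poissonPMF l2 k ≤ (l1 ^ k / k.factorial) * 1 := by
        gcongr
        exact poissonPMF_le_one h2 _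
    _ = l1 ^ k / k.factorial := mul_one _
lemma summable_skellam_nat (h1 : 0 ≤ l1) (h2 : 0 ≤ l2) :
    Summable (fun m : ℕ => skellamPMF l1 l2 (m : ℤ)) := by
  set C : ℝ := ∑' k : ℕ, (l1 ^ k / k.factorial) * poissonPMF l2 k with hC
  refine Summable.of_nonneg_of_le (skellam_nat_nonneg h1 h2) (fun m => ?_)
    ((summable_poissonPMF l1).mul_right C)
  rw [skellam_nat]
  calc (∑' k : ℕ, poissonPMF l1 (m + k) * poissonPMF l2 k)
      ≤ ∑' k : ℕ, poissonPMF l1 m * ((l1 ^ k / k.factorial) * poissonPMF l2 k) := by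
        refine (summable_inner h1 h2 m).tsum_le_tsum (fun k => ?_)
          ((summable_weight h1 h2).mul_left _)
        rw [← mul_assoc]
        exact mul_le_mul_of_nonneg_right (poissonPMF_add_le h1 m k) (poissonPMF_nonneg h2 k)
    _ = poissonPMF l1 m * C := tsum_mul_left
lemma summable_k_poisson (h2 : 0 ≤ l2) :
    Summable (fun k : ℕ => (k : ℝ) * poissonPMF l2 k) := by
  rw [← summable_nat_add_iff 1]
  refine ((summable_poissonPMF l2).mul_left l2).congr fun k => ?_
  push_cast
  rw [← poissonPMF_succ l2 k]
lemma stein (h1 : 0 ≤ l1) (h2 : 0 ≤ l2) (n : ℕ) :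
    ((n : ℝ) + 1) * skellamPMF l1 l2 ((n + 1 : ℕ) : ℤ)
      = l1 * skellamPMF l1 l2 (n : ℤ) - l2 * skellamPMF l1 l2 ((n + 2 : ℕ) : ℤ) := by
  rw [skellam_nat, skellam_nat, skellam_nat]
  set P1 := poissonPMF l1 with hP1
  set P2 := poissonPMF l2 with hP2
  have hA : Summable (fun k : ℕ => l1 * (P1 (n + k) * P2 k)) :=
    (summable_inner h1 h2 n).mul_left l1
  have hBle : ∀ k : ℕ, (k : ℝ) * (P1 (n + 1 + k) * P2 k) ≤ (k : ℝ) * P2 k := by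
    intro k
    have hle := poissonPMF_le_one h1 (n + 1 + k)
    have hk2 := poissonPMF_nonneg h2 k
    have hk1 := poissonPMF_nonneg h1 (n + 1 + k)
    have hkn : (0:ℝ) ≤ (k:ℝ) := Nat.cast_nonneg k
    rw [hP1, hP2]
    exact mul_le_mul_of_nonneg_left
      (by calc poissonPMF l1 (n+1+k) * poissonPMF l2 k ≤ 1 * poissonPMF l2 k :=
            mul_le_mul_of_nonneg_right hle hk2
          _ = poissonPMF l2 k := one_mul _) hkn
  have hB : Summable (fun k : ℕ => (k : ℝ) * (P1 (n + 1 + k) * P2 k)) :=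
    Summable.of_nonneg_of_le
      (fun k => mul_nonneg (Nat.cast_nonneg k)
        (mul_nonneg (poissonPMF_nonneg h1 _) (poissonPMF_nonneg h2 _)))
      hBle (summable_k_poisson h2)
  have hpt : ∀ k : ℕ, ((n : ℝ) + 1) * (P1 (n + 1 + k) * P2 k)
      = l1 * (P1 (n + k) * P2 k) - (k : ℝ) * (P1 (n + 1 + k) * P2 k) := by
    intro k
    have h3 := congrArg (· * P2 k) (poissonPMF_succ l1 (n + k))
    have he : n + 1 + k = n + k + 1 := by omega
    rw [he]
    push_cast at h3 ⊢
    linear_combination h3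
  calc ((n : ℝ) + 1) * ∑' k : ℕ, P1 (n + 1 + k) * P2 k
      = ∑' k : ℕ, ((n : ℝ) + 1) * (P1 (n + 1 + k) * P2 k) := tsum_mul_left.symm
    _ = ∑' k : ℕ, (l1 * (P1 (n + k) * P2 k) - (k : ℝ) * (P1 (n + 1 + k) * P2 k)) :=
        tsum_congr hpt
    _ = (∑' k : ℕ, l1 * (P1 (n + k) * P2 k))
          - ∑' k : ℕ, (k : ℝ) * (P1 (n + 1 + k) * P2 k) := Summable.tsum_sub hA hB
    _ = l1 * (∑' k : ℕ, P1 (n + k) * P2 k) - l2 * ∑' k : ℕ, P1 (n + 2 + k) * P2 k := by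
        rw [tsum_mul_left]
        congr 1
        rw [Summable.tsum_eq_zero_add hB]
        simp only [Nat.cast_zero, zero_mul, zero_add]
        rw [← tsum_mul_left]
        refine tsum_congr fun k => ?_
        have h4 := poissonPMF_succ l2 k
        have he : n + 1 + (k + 1) = n + 2 + k := by omega
        rw [he]
        push_cast
        linear_combination P1 (n + 2 + k) * h4
lemma lhs_reindex (l1 l2 : ℝ) :
    ∑' x : ℤ, (if 0 ≤ x then (x : ℝ) else 0) * skellamPMF l1 l2 x
      = ∑' n : ℕ, (n : ℝ) * skellamPMF l1 l2 (n : ℤ) := by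
  have hg : Function.Injective (fun n : ℕ => (n : ℤ)) := fun a b h => by
    simpa using h
  have hsupp : Function.support
      (fun x : ℤ => (if 0 ≤ x then (x : ℝ) else 0) * skellamPMF l1 l2 x)
      ⊆ Set.range (fun n : ℕ => (n : ℤ)) := by
    intro x hx
    simp only [Function.mem_support] at hx
    by_cases h : 0 ≤ x
    · exact ⟨x.toNat, by simp; omega⟩
    · simp [h] at hx
  rw [← Function.Injective.tsum_eq hg hsupp]
  refine tsum_congr fun n => ?_
  simp
lemma tail_reindex (l1 l2 : ℝ) :
    skellamTail l1 l2 1 = ∑' n : ℕ, skellamPMF l1 l2 ((n : ℤ) + 1) := by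
  unfold skellamTail
  have hg : Function.Injective (fun n : ℕ => (n : ℤ) + 1) := fun a b h => by
    simp only at h; omega
  have hsupp : Function.support
      (fun x : ℤ => if 1 ≤ x then skellamPMF l1 l2 x else 0)
      ⊆ Set.range (fun n : ℕ => (n : ℤ) + 1) := by
    intro x hx
    simp only [Function.mem_support] at hx
    by_cases h : 1 ≤ x
    · exact ⟨(x - 1).toNat, by simp; omega⟩
    · simp [h] at hx
  rw [← Function.Injective.tsum_eq hg hsupp]
  refine tsum_congr fun n => ?_
  rw [if_pos (by omega : (1:ℤ) ≤ (n : ℤ) + 1)]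

end Helpers

theorem skellam_partial_mean_ge_zero (l1 l2 : ℝ) (h1 : 0 < l1) (h2 : 0 < l2) :
    ∑' x : ℤ, (if 0 ≤ x then (x : ℝ) else 0) * skellamPMF l1 l2 x =
      l2 * skellamPMF l1 l2 1 + l1 * skellamPMF l1 l2 0
        + (l1 - l2) * skellamTail l1 l2 1 := by
  set q : ℕ → ℝ := fun n => skellamPMF l1 l2 (n : ℤ) with hqdef
  have hq : Summable q := summable_skellam_nat h1.le h2.le
  have hq1 : Summable (fun n => q (n + 1)) := (summable_nat_add_iff 1).2 hq
  have hq2 : Summable (fun n => q (n + 2)) := (summable_nat_add_iff 2).2 hq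
  have hst : ∀ n : ℕ, ((n : ℝ) + 1) * q (n + 1) = l1 * q n - l2 * q (n + 2) := by
    intro n
    have := stein h1.le h2.le n
    simpa [hqdef] using this
  have hsum1 : Summable (fun n : ℕ => ((n : ℝ) + 1) * q (n + 1)) :=
    ((hq.mul_left l1).sub (hq2.mul_left l2)).congr fun n => (hst n).symm
  have hsum0 : Summable (fun n : ℕ => (n : ℝ) * q n) := by
    refine (summable_nat_add_iff 1).1 (hsum1.congr fun n => ?_)
    push_cast; ring
  have e1 : ∑' n : ℕ, q n = q 0 + ∑' n : ℕ, q (n + 1) := Summable.tsum_eq_zero_add hq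
  have e2 : ∑' n : ℕ, q (n + 1) = q 1 + ∑' n : ℕ, q (n + 2) := by
    have := Summable.tsum_eq_zero_add (f := fun n : ℕ => q (n + 1)) hq1
    simpa [add_assoc] using this
  have etail : skellamTail l1 l2 1 = ∑' n : ℕ, q (n + 1) := by
    rw [tail_reindex]
    refine tsum_congr fun n => ?_
    simp [hqdef]
  have key : ∑' n : ℕ, (n : ℝ) * q n
      = l1 * ∑' n : ℕ, q n - l2 * ∑' n : ℕ, q (n + 2) := by
    calc ∑' n : ℕ, (n : ℝ) * q n
        = ((0:ℕ) : ℝ) * q 0 + ∑' n : ℕ, (((n+1 : ℕ)) : ℝ) * q (n + 1) :=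
          Summable.tsum_eq_zero_add hsum0
      _ = ∑' n : ℕ, (((n : ℝ)) + 1) * q (n + 1) := by
          push_cast
          rw [zero_mul, zero_add]
      _ = ∑' n : ℕ, (l1 * q n - l2 * q (n + 2)) := tsum_congr hst
      _ = (∑' n : ℕ, l1 * q n) - ∑' n : ℕ, l2 * q (n + 2) :=
          Summable.tsum_sub (hq.mul_left l1) (hq2.mul_left l2)
      _ = l1 * ∑' n : ℕ, q n - l2 * ∑' n : ℕ, q (n + 2) := by
          rw [tsum_mul_left, tsum_mul_left]
  have hq0 : skellamPMF l1 l2 0 = q 0 := by simp [hqdef]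
  have hq1' : skellamPMF l1 l2 1 = q 1 := by simp [hqdef]
  rw [lhs_reindex, hq0, hq1', etail]
  rw [show ∑' n : ℕ, (n : ℝ) * skellamPMF l1 l2 (n : ℤ) = ∑' n : ℕ, (n : ℝ) * q n from rfl,
    key, e1]
  have e3 : ∑' n : ℕ, q (n + 2) = (∑' n : ℕ, q (n + 1)) - q 1 := by
    rw [e2]; ring
  rw [e3]
  ring
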